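/- Let Ω be a Cantor group and let T : Ω → Ω be a minimal translation. Then there exists a dense G_δ set 𝒢 ⊆ C(Ω,ℝ) such that for every f ∈ 𝒢 and every ω ∈ Ω, the potential V_ω given by V_ω(n) = f(Tⁿω) is a Gordon potential. -/

import Mathlib

open Filter

/-- A bounded function `V : ℤ → ℝ` is a Gordon potential if there are positive
integers `q k → ∞` such that `max_{1 ≤ n ≤ q k} |V(n) - V(n ± q k)| ≤ k^(-q k)`
for every `k ≥ 1`. -/
def IsGordonPotential (V : ℤ → ℝ) : Prop :=
  (∃ C : ℝ, ∀ n : ℤ, |V n| ≤ C) ∧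
  ∃ q : ℕ → ℕ, (∀ k, 1 ≤ q k) ∧ Tendsto q atTop atTop ∧
    ∀ k : ℕ, 1 ≤ k → ∀ n : ℤ, 1 ≤ n → n ≤ (q k : ℤ) →
      |V n - V (n + (q k : ℤ))| ≤ (k : ℝ) ^ (-(q k : ℤ)) ∧
      |V n - V (n - (q k : ℤ))| ≤ (k : ℝ) ^ (-(q k : ℤ))

section Aux

variable {Ω : Type*} [TopologicalSpace Ω] [AddCommGroup Ω] [IsTopologicalAddGroup Ω]
    [CompactSpace Ω] [TotallyDisconnectedSpace Ω] [T2Space Ω]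

/-- Locally constant approximation: any continuous function on a compact totally
disconnected abelian group can be approximated by a function which is periodic
along the orbit of `α`. -/
lemma exists_periodic_approx (α : Ω) (f : C(Ω, ℝ)) {ε : ℝ} (hε : 0 < ε) :
    ∃ g : C(Ω, ℝ), ‖f - g‖ < ε ∧ ∃ q₀ : ℕ, 1 ≤ q₀ ∧ ∀ ω : Ω, g (ω + q₀ • α) = g ω := by
  classical
  letI : UniformSpace Ω := IsTopologicalAddGroup.rightUniformSpace Ω
  haveI : IsUniformAddGroup Ω := isUniformAddGroup_of_addCommGroup
  have huc : UniformContinuous f := CompactSpace.uniformContinuous_of_continuous f.continuous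
  have h1 : {p : ℝ × ℝ | dist p.1 p.2 < ε} ∈ uniformity ℝ := Metric.dist_mem_uniformity hε
  have h2 := huc h1
  rw [uniformity_eq_comap_nhds_zero] at h2
  obtain ⟨U, hU, hU2⟩ := Filter.mem_comap.mp h2
  obtain ⟨U', hU'U, hU'open, hU'0⟩ := mem_nhds_iff.mp hU
  obtain ⟨W, hWclopen, hW0, hWU⟩ := compact_exists_isClopen_in_isOpen hU'open hU'0
  obtain ⟨H, hHW⟩ :=
    IsTopologicalAddGroup.exist_openAddSubgroup_sub_clopen_nhds_of_zero hWclopen hW0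
  set Hs := H.toAddSubgroup with hHs
  have key : ∀ x y : Ω, x - y ∈ Hs → dist (f y) (f x) < ε := by
    intro x y h
    have hmem : ((y, x) : Ω × Ω) ∈ (fun p : Ω × Ω => p.2 - p.1) ⁻¹' U :=
      hU'U (hWU (hHW (show x - y ∈ (H : Set Ω) from h)))
    exact hU2 hmem
  -- the locally constant approximation
  haveI : DiscreteTopology (Ω ⧸ Hs) := QuotientAddGroup.discreteTopology H.isOpen
  let s : Ω ⧸ Hs → Ω := Quotient.out
  let g : C(Ω, ℝ) := ⟨fun ω => f (s (QuotientAddGroup.mk ω)),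
    (continuous_of_discreteTopology (f := fun x : Ω ⧸ Hs => f (s x))).comp
      continuous_quotient_mk'⟩
  have hsec : ∀ ω : Ω, s (QuotientAddGroup.mk ω) - ω ∈ Hs := by
    intro ω
    have h1 : QuotientAddGroup.mk (s := Hs) (s (QuotientAddGroup.mk ω))
        = QuotientAddGroup.mk ω := Quotient.out_eq _
    have h2 := (QuotientAddGroup.eq (s := Hs)).mp h1
    have : -(s (QuotientAddGroup.mk ω)) + ω ∈ Hs := h2
    have := Hs.neg_mem this
    simpa [neg_add_rev, sub_eq_add_neg, add_comm] using this
  have hinv : ∀ ω : Ω, ∀ h ∈ Hs, g (ω + h) = g ω := by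
    intro ω h hh
    have : QuotientAddGroup.mk (s := Hs) (ω + h) = QuotientAddGroup.mk ω := by
      rw [QuotientAddGroup.eq]
      simpa [neg_add_rev, sub_eq_add_neg, add_comm, add_left_comm] using Hs.neg_mem hh
    simp only [g, ContinuousMap.coe_mk, this]
  refine ⟨g, ?_, ?_⟩
  · rw [ContinuousMap.norm_lt_iff _ hε]
    intro x
    have := key (s (QuotientAddGroup.mk x)) x (hsec x)
    simpa [ContinuousMap.sub_apply, g, Real.dist_eq, Real.norm_eq_abs] using this
  · -- find a positive period
    haveI : Finite (Ω ⧸ Hs) := AddSubgroup.quotient_finite_of_isOpen Hs H.isOpen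
    obtain ⟨a, b, hab, heq⟩ := Finite.exists_ne_map_eq_of_infinite
      (fun n : ℕ => QuotientAddGroup.mk (s := Hs) (n • α))
    wlog hlt : a < b generalizing a b
    · exact this b a hab.symm heq.symm (by omega)
    refine ⟨b - a, by omega, ?_⟩
    have hmem : (b - a) • α ∈ Hs := by
      have h2 := (QuotientAddGroup.eq (s := Hs)).mp heq
      have hb : b • α = a • α + (b - a) • α := by
        rw [← add_nsmul]
        congr 1
        omega
      have : -(a • α) + b • α ∈ Hs := h2
      rwa [hb, neg_add_cancel_left] at this
    exact fun ω => hinv ω _ hmem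

end Aux

/-- For a Cantor group `Ω` and a minimal translation `T ω = ω + α`,
there exists a dense `G_δ` set `𝒢 ⊆ C(Ω,ℝ)` such that for every `f ∈ 𝒢` and
every `ω ∈ Ω`, the potential `V_ω(n) = f(Tⁿ ω) = f(ω + n • α)` is a Gordon
potential. -/
theorem statement3
    (Ω : Type*) [TopologicalSpace Ω] [AddCommGroup Ω] [IsTopologicalAddGroup Ω]
    [CompactSpace Ω] [TotallyDisconnectedSpace Ω] [PerfectSpace Ω] [T2Space Ω]
    (T : Ω → Ω) (α : Ω) (hT : ∀ ω, T ω = ω + α)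
    (hMin : ∀ ω : Ω, Dense {ω' : Ω | ∃ n : ℤ, ω' = ω + n • α}) :
    ∃ 𝒢 : Set C(Ω, ℝ), Dense 𝒢 ∧ IsGδ 𝒢 ∧
      ∀ f ∈ 𝒢, ∀ ω : Ω, IsGordonPotential (fun n : ℤ => f (ω + n • α)) := by
  classical
  -- translation by `q • α` as a continuous map
  let τ : ℕ → C(Ω, Ω) := fun q => ⟨fun ω => ω + q • α, continuous_id.add continuous_const⟩
  -- the defect functional
  let D : ℕ → C(Ω, ℝ) → ℝ := fun q f => ‖f - f.comp (τ q)‖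
  have hDle : ∀ q : ℕ, ∀ f g : C(Ω, ℝ), D q f ≤ D q g + 2 * dist f g := by
    intro q f g
    have h1 : ‖g.comp (τ q) - f.comp (τ q)‖ ≤ ‖g - f‖ := by
      apply ContinuousMap.norm_le _ (norm_nonneg _) |>.mpr
      intro x
      have := (g - f).norm_coe_le_norm ((τ q) x)
      simpa [ContinuousMap.sub_apply, ContinuousMap.comp_apply] using this
    have h2 : f - f.comp (τ q) = (f - g) + (g - g.comp (τ q)) + (g.comp (τ q) - f.comp (τ q)) := by
      abel
    calc D q f = ‖(f - g) + (g - g.comp (τ q)) + (g.comp (τ q) - f.comp (τ q))‖ := by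
          rw [show D q f = ‖f - f.comp (τ q)‖ from rfl, h2]
      _ ≤ ‖(f - g) + (g - g.comp (τ q))‖ + ‖g.comp (τ q) - f.comp (τ q)‖ := norm_add_le _ _
      _ ≤ (‖f - g‖ + ‖g - g.comp (τ q)‖) + ‖g - f‖ := by
          gcongr
          exact norm_add_le _ _
      _ = D q g + 2 * dist f g := by
          rw [dist_eq_norm, show ‖g - f‖ = ‖f - g‖ from norm_sub_rev _ _]
          ring
  -- pointwise bound from the defect functional
  have hpoint : ∀ q : ℕ, ∀ f : C(Ω, ℝ), ∀ x : Ω, |f x - f (x + q • α)| ≤ D q f := by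
    intro q f x
    have := (f - f.comp (τ q)).norm_coe_le_norm x
    simpa [ContinuousMap.sub_apply, ContinuousMap.comp_apply, τ, Real.norm_eq_abs] using this
  -- the basic open sets
  let B : ℕ → ℕ → Set C(Ω, ℝ) := fun k q => {f | D q f < ((max k 1 : ℕ) : ℝ) ^ (-(q : ℤ))}
  have hmaxpos : ∀ k : ℕ, (0 : ℝ) < ((max k 1 : ℕ) : ℝ) := by
    intro k
    exact_mod_cast Nat.lt_of_lt_of_le Nat.zero_lt_one (le_max_right k 1)
  have hBopen : ∀ k q : ℕ, IsOpen (B k q) := by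
    intro k q
    rw [Metric.isOpen_iff]
    intro f hf
    refine ⟨(((max k 1 : ℕ) : ℝ) ^ (-(q : ℤ)) - D q f) / 2, by simpa [B] using hf, ?_⟩
    intro g hg
    rw [Metric.mem_ball] at hg
    have := hDle q g f
    have : D q g < ((max k 1 : ℕ) : ℝ) ^ (-(q : ℤ)) := by
      calc D q g ≤ D q f + 2 * dist g f := hDle q g f
        _ < D q f + 2 * ((((max k 1 : ℕ) : ℝ) ^ (-(q : ℤ)) - D q f) / 2) := by linarith
        _ = ((max k 1 : ℕ) : ℝ) ^ (-(q : ℤ)) := by ring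
    exact this
  refine ⟨⋂ k : ℕ, ⋃ q ∈ {q : ℕ | max k 1 ≤ q}, B k q, ?_, ?_, ?_⟩
  · -- density
    rw [Metric.dense_iff]
    intro f r hr
    obtain ⟨g, hfg, q₀, hq₀, hginv⟩ := exists_periodic_approx α f hr
    have hmulti : ∀ m : ℕ, ∀ ω : Ω, g (ω + (m * q₀) • α) = g ω := by
      intro m
      induction m with
      | zero => simp
      | succ n ih =>
        intro ω
        have h1 : (n + 1) * q₀ = n * q₀ + q₀ := by ring
        rw [h1, add_nsmul, ← add_assoc, hginv, ih]
    refine ⟨g, ?_, ?_⟩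
    · rw [Metric.mem_ball, dist_comm, dist_eq_norm]
      exact hfg
    · rw [Set.mem_iInter]
      intro k
      rw [Set.mem_iUnion₂]
      refine ⟨max k 1 * q₀, Nat.le_mul_of_pos_right _ (by omega), ?_⟩
      have hzero : g - g.comp (τ (max k 1 * q₀)) = 0 := by
        ext ω
        simp [ContinuousMap.sub_apply, ContinuousMap.comp_apply, τ, hmulti (max k 1) ω]
      show D (max k 1 * q₀) g < _
      rw [show D (max k 1 * q₀) g = ‖g - g.comp (τ (max k 1 * q₀))‖ from rfl, hzero, norm_zero]
      exact zpow_pos (hmaxpos k) _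
  · -- Gδ
    exact .iInter fun k => ((isOpen_biUnion fun q _ => hBopen k q).isGδ)
  · -- every member gives Gordon potentials
    intro f hf ω
    constructor
    · exact ⟨‖f‖, fun n => by
        simpa [Real.norm_eq_abs] using f.norm_coe_le_norm (ω + n • α)⟩
    · have hq : ∀ k : ℕ, ∃ q : ℕ, max k 1 ≤ q ∧
          D q f < ((max k 1 : ℕ) : ℝ) ^ (-(q : ℤ)) := by
        intro k
        have := Set.mem_iInter.mp hf k
        rw [Set.mem_iUnion₂] at this
        obtain ⟨q, hq1, hq2⟩ := this
        exact ⟨q, hq1, hq2⟩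
      choose Q hQ1 hQ2 using hq
      refine ⟨Q, fun k => le_trans (le_max_right k 1) (hQ1 k),
        tendsto_atTop_mono (fun k => le_trans (le_max_left k 1) (hQ1 k)) tendsto_id, ?_⟩
      intro k hk n hn1 hn2
      have hmax : max k 1 = k := max_eq_left hk
      have hbound : D (Q k) f ≤ (k : ℝ) ^ (-((Q k : ℕ) : ℤ)) := by
        have := hQ2 k
        rw [hmax] at this
        exact le_of_lt this
      constructor
      · have e1 : ω + (n + (Q k : ℤ)) • α = (ω + n • α) + (Q k : ℕ) • α := by
          rw [add_zsmul, natCast_zsmul, ← add_assoc]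
        show |f (ω + n • α) - f (ω + (n + (Q k : ℤ)) • α)| ≤ _
        rw [e1]
        exact le_trans (hpoint (Q k) f (ω + n • α)) hbound
      · have e2 : ω + n • α = (ω + (n - (Q k : ℤ)) • α) + (Q k : ℕ) • α := by
          rw [← natCast_zsmul (α : Ω), add_assoc, ← add_zsmul, sub_add_cancel]
        show |f (ω + n • α) - f (ω + (n - (Q k : ℤ)) • α)| ≤ _
        rw [e2, abs_sub_comm]
        exact le_trans (hpoint (Q k) f (ω + (n - (Q k : ℤ)) • α)) hbound
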